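/- Let [u,w] be a Bruhat interval in a Coxeter group W and let s ∈ S with s ∉ D_L(u) and su ≰ w. Then ℓ(sw) > ℓ(w), and the map x ↦ sx is a poset isomorphism from [u,w] onto [su,sw]. -/

import Mathlib

namespace Paper

/-! ### Bruhat order on a Coxeter group -/

variable {B W : Type*} [Group W] {M : CoxeterMatrix B}

/-- One step in the Bruhat order: multiply on the left by a reflection,
increasing the length. -/
def BruhatStep (cs : CoxeterSystem M W) (a b : W) : Prop :=
  ∃ t : W, cs.IsReflection t ∧ b = t * a ∧ cs.length a < cs.length b

/-- The Bruhat order on a Coxeter group. -/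
def BruhatLE (cs : CoxeterSystem M W) : W → W → Prop :=
  Relation.ReflTransGen (BruhatStep cs)

theorem BruhatLE.length_le {cs : CoxeterSystem M W} {a b : W} (h : BruhatLE cs a b) :
    cs.length a ≤ cs.length b := by
  induction h with
  | refl => exact le_rfl
  | tail _ h ih => obtain ⟨t, -, -, hlt⟩ := h; exact ih.trans hlt.le

theorem BruhatLE.length_lt {cs : CoxeterSystem M W} {a b : W} (h : BruhatLE cs a b)
    (hne : a ≠ b) : cs.length a < cs.length b := by
  rcases Relation.ReflTransGen.cases_head h with h' | ⟨c, hc, h'⟩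
  · exact absurd h' hne
  · obtain ⟨t, -, -, hlt⟩ := hc
    exact lt_of_lt_of_le hlt (BruhatLE.length_le h')

theorem BruhatLE.antisymm {cs : CoxeterSystem M W} {a b : W} (h1 : BruhatLE cs a b)
    (h2 : BruhatLE cs b a) : a = b := by
  by_contra hne
  exact absurd (BruhatLE.length_lt h1 hne) (not_lt.mpr (BruhatLE.length_le h2))

/-- The Bruhat interval `[u,w]`, as a type. -/
abbrev BruhatInterval (cs : CoxeterSystem M W) (u w : W) : Type _ :=
  {y : W // BruhatLE cs u y ∧ BruhatLE cs y w}

/-- The Bruhat interval `[u,w]` is a poset under the Bruhat order. -/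
instance (cs : CoxeterSystem M W) (u w : W) : PartialOrder (BruhatInterval cs u w) where
  le a b := BruhatLE cs a.1 b.1
  le_refl _ := Relation.ReflTransGen.refl
  le_trans _ _ _ := Relation.ReflTransGen.trans
  le_antisymm _ _ h1 h2 := Subtype.ext (BruhatLE.antisymm h1 h2)

/-- A principal order ideal `{v : v ≤ x}` of the Bruhat order, as a type. -/
abbrev BruhatIdeal (cs : CoxeterSystem M W) (x : W) : Type _ :=
  {v : W // BruhatLE cs v x}

/-- A principal order ideal of the Bruhat order is a poset under the Bruhat order. -/
instance (cs : CoxeterSystem M W) (x : W) : PartialOrder (BruhatIdeal cs x) where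
  le a b := BruhatLE cs a.1 b.1
  le_refl _ := Relation.ReflTransGen.refl
  le_trans _ _ _ := Relation.ReflTransGen.trans
  le_antisymm _ _ h1 h2 := Subtype.ext (BruhatLE.antisymm h1 h2)

/-! ### Posets: matchings, special matchings and zircons -/

/-- A matching of a poset: an involution matching each element with an element
covering it or covered by it. -/
def IsMatching {α : Type*} [PartialOrder α] (f : α → α) : Prop :=
  Function.Involutive f ∧ ∀ x : α, f x ⋖ x ∨ x ⋖ f x

/-- A special matching of a poset. -/
def IsSpecialMatching {α : Type*} [PartialOrder α] (f : α → α) : Prop :=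
  IsMatching f ∧ ∀ x y : α, x ⋖ y → f x = y ∨ f x < f y

/-- A zircon: a poset in which the principal order ideal of every non-minimal element is
finite and has a special matching. -/
def IsZircon (α : Type*) [PartialOrder α] : Prop :=
  ∀ x : α, (∃ y : α, y < x) →
    ({v : α | v ≤ x}.Finite ∧
      ∃ f : {v : α // v ≤ x} → {v : α // v ≤ x}, IsSpecialMatching f)

/-- The degree of `v` in the Bruhat graph of the interval `[u,w]`: the number of `y ∈ [u,w]`
such that `v⁻¹ * y` is a reflection. -/
noncomputable def bruhatDeg (cs : CoxeterSystem M W) (u w v : W) : ℕ :=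
  Nat.card {y : W // (BruhatLE cs u y ∧ BruhatLE cs y w) ∧ cs.IsReflection (v⁻¹ * y)}

/-- A Bruhat interval `[u,w]` is rationally smooth if `deg_{y,w}(y) = ℓ(w) - ℓ(y)` for all
`y ∈ [u,w]` (Carrell–Peterson). -/
def RationallySmooth (cs : CoxeterSystem M W) (u w : W) : Prop :=
  ∀ y : W, BruhatLE cs u y → BruhatLE cs y w →
    bruhatDeg cs y w y = cs.length w - cs.length y




section StrongExchange

open CoxeterSystem List

variable {B W : Type*} [Group W] {M : CoxeterMatrix B} (cs : CoxeterSystem M W)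

open scoped Classical

set_option linter.unusedSectionVars false

/-- The sign/conjugation action of a simple reflection on `W × ℤˣ`. -/
noncomputable def reflFlip (i : B) : W × ℤˣ → W × ℤˣ := fun p =>
  (cs.simple i * p.1 * (cs.simple i)⁻¹, if p.1 = cs.simple i then -p.2 else p.2)

lemma mul_conj_eq_iff (a x y : W) : a * x * a⁻¹ = y ↔ x = a⁻¹ * y * a := by
  constructor
  · intro h; rw [← h]; group
  · intro h; rw [h]; group

lemma conj_simple_eq_simple_iff (i : B) (t : W) :
    cs.simple i * t * (cs.simple i)⁻¹ = cs.simple i ↔ t = cs.simple i := by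
  rw [mul_conj_eq_iff]
  have : (cs.simple i)⁻¹ * cs.simple i * cs.simple i = cs.simple i := by
    rw [inv_mul_cancel, one_mul]
  rw [this]

lemma reflFlip_involutive (i : B) : Function.Involutive (reflFlip cs i) := by
  rintro ⟨t, ε⟩
  simp only [reflFlip, conj_simple_eq_simple_iff]
  refine Prod.ext ?_ ?_
  · simp [mul_assoc]
  · by_cases h : t = cs.simple i <;> simp [h]

/-- The action of a simple reflection, as a permutation. -/
noncomputable def reflPerm (i : B) : Equiv.Perm (W × ℤˣ) :=
  (reflFlip_involutive cs i).toPerm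

lemma reflPerm_apply (i : B) (p : W × ℤˣ) : reflPerm cs i p = reflFlip cs i p := rfl

lemma simple_mul_pow (i j : B) (n : ℕ) :
    cs.simple j * (cs.simple i * cs.simple j) ^ n
      = ((cs.simple i * cs.simple j) ^ n)⁻¹ * cs.simple j := by
  induction n with
  | zero => simp
  | succ k ih =>
    have hb : cs.simple j * (cs.simple i * cs.simple j)
        = (cs.simple i * cs.simple j)⁻¹ * cs.simple j := by
      rw [mul_inv_rev, cs.inv_simple, cs.inv_simple, mul_assoc]
    rw [pow_succ', ← mul_assoc, hb, mul_assoc, ih, ← mul_assoc, ← mul_inv_rev,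
      ← pow_succ, ← pow_succ']

lemma braid_pow_apply (i j : B) (n : ℕ) (t : W) (ε : ℤˣ) :
    ((reflPerm cs i * reflPerm cs j) ^ n) (t, ε) =
      ((cs.simple i * cs.simple j) ^ n * t * (((cs.simple i * cs.simple j) ^ n)⁻¹),
        ε * ∏ c ∈ Finset.range (2 * n),
          (if t = ((cs.simple i * cs.simple j) ^ c)⁻¹ * cs.simple j then (-1 : ℤˣ) else 1)) := by
  induction n with
  | zero => simp
  | succ k ih =>
    have hjinv : (cs.simple j)⁻¹ = cs.simple j := cs.inv_simple j
    have hpinv : (cs.simple i * cs.simple j)⁻¹ = cs.simple j * cs.simple i := by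
      rw [mul_inv_rev, cs.inv_simple, cs.inv_simple]
    have hcomm : ∀ m : ℕ, cs.simple j * (cs.simple i * cs.simple j) ^ m
        = ((cs.simple i * cs.simple j) ^ m)⁻¹ * cs.simple j := simple_mul_pow cs i j
    rw [pow_succ', Equiv.Perm.mul_apply, ih]
    rw [Equiv.Perm.mul_apply, reflPerm_apply, reflPerm_apply]
    have hc1 : ((cs.simple i * cs.simple j) ^ k * t * ((cs.simple i * cs.simple j) ^ k)⁻¹
        = cs.simple j) ↔ (t = ((cs.simple i * cs.simple j) ^ (2 * k))⁻¹ * cs.simple j) := by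
      rw [mul_conj_eq_iff]
      have h5 : ((cs.simple i * cs.simple j) ^ k)⁻¹ * cs.simple j * (cs.simple i * cs.simple j) ^ k
          = ((cs.simple i * cs.simple j) ^ (2 * k))⁻¹ * cs.simple j := by
        rw [two_mul, mul_assoc, hcomm k, ← mul_assoc, ← mul_inv_rev, ← pow_add]
      rw [h5]
    have hc2 : (cs.simple j * ((cs.simple i * cs.simple j) ^ k * t
          * ((cs.simple i * cs.simple j) ^ k)⁻¹) * (cs.simple j)⁻¹ = cs.simple i)
        ↔ (t = ((cs.simple i * cs.simple j) ^ (2 * k + 1))⁻¹ * cs.simple j) := by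
      rw [mul_conj_eq_iff, mul_conj_eq_iff]
      have h2 : (cs.simple j)⁻¹ * cs.simple i * cs.simple j
          = (cs.simple i * cs.simple j)⁻¹ * cs.simple j := by
        rw [hjinv, hpinv]
      have hx : (((cs.simple i * cs.simple j) ^ k)⁻¹ * (cs.simple i * cs.simple j)⁻¹)
            * ((cs.simple i * cs.simple j) ^ k)⁻¹
          = ((cs.simple i * cs.simple j) ^ (2 * k + 1))⁻¹ := by
        rw [← mul_inv_rev, ← pow_succ', ← mul_inv_rev, ← pow_add]
        have hkk : k + (k + 1) = 2 * k + 1 := by omega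
        rw [hkk]
      have h4 : ((cs.simple i * cs.simple j) ^ k)⁻¹
            * ((cs.simple i * cs.simple j)⁻¹ * cs.simple j) * (cs.simple i * cs.simple j) ^ k
          = ((cs.simple i * cs.simple j) ^ (2 * k + 1))⁻¹ * cs.simple j := by
        rw [mul_assoc, mul_assoc, hcomm k, ← mul_assoc, ← mul_assoc, hx]
      rw [h2, h4]
    refine Prod.ext ?_ ?_
    · simp only [reflFlip]
      have hA : ∀ x : W, cs.simple i * (cs.simple j * x * (cs.simple j)⁻¹) * (cs.simple i)⁻¹
          = (cs.simple i * cs.simple j) * x * (cs.simple i * cs.simple j)⁻¹ := by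
        intro x
        rw [mul_inv_rev]
        group
      rw [hA, pow_succ' (cs.simple i * cs.simple j) k,
        mul_inv_rev (cs.simple i * cs.simple j) ((cs.simple i * cs.simple j) ^ k)]
      simp only [mul_assoc]
    · simp only [reflFlip]
      rw [hc1, hc2]
      have h2 : 2 * (k + 1) = (2 * k) + 1 + 1 := by ring
      rw [h2, Finset.prod_range_succ, Finset.prod_range_succ]
      split_ifs <;>
        simp [neg_mul, mul_neg, neg_neg, mul_assoc, mul_comm, mul_left_comm]

lemma reflPerm_liftable : M.IsLiftable (fun i => (reflPerm cs i : Equiv.Perm (W × ℤˣ))) := by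
  intro i j
  ext ⟨t, ε⟩ : 1
  show ((reflPerm cs i * reflPerm cs j) ^ M i j) (t, ε) = (1 : Equiv.Perm (W × ℤˣ)) (t, ε)
  rw [braid_pow_apply, cs.simple_mul_simple_pow i j]
  have hper : ∀ c : ℕ,
      ((cs.simple i * cs.simple j) ^ (M i j + c))⁻¹ = ((cs.simple i * cs.simple j) ^ c)⁻¹ := by
    intro c
    rw [pow_add, cs.simple_mul_simple_pow i j, one_mul]
  have hprod : (∏ c ∈ Finset.range (2 * M i j),
      (if t = ((cs.simple i * cs.simple j) ^ c)⁻¹ * cs.simple j then (-1 : ℤˣ) else 1)) = 1 := by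
    have h2 : 2 * M i j = M i j + M i j := by ring
    rw [h2, Finset.prod_range_add]
    simp only [hper]
    exact Int.units_mul_self _
  rw [hprod]
  simp

/-- The `±1` reflection representation of the Coxeter group. -/
noncomputable def reflRep : W →* Equiv.Perm (W × ℤˣ) :=
  cs.lift ⟨fun i => reflPerm cs i, reflPerm_liftable cs⟩

lemma reflRep_simple (i : B) : reflRep cs (cs.simple i) = reflPerm cs i :=
  cs.lift_apply_simple (reflPerm_liftable cs) i

/-- The sign of reflection `t` in `w`. -/
noncomputable def eta (w t : W) : ℤˣ := (reflRep cs w (t, 1)).2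

/-- Sign-count over a list. -/
noncomputable def signCount (t : W) (l : List W) : ℤˣ :=
  (l.map (fun x => if x = t then (-1 : ℤˣ) else 1)).prod

@[simp] lemma signCount_nil (t : W) : signCount t ([] : List W) = 1 := rfl

lemma signCount_cons (t x : W) (l : List W) :
    signCount t (x :: l) = (if x = t then (-1 : ℤˣ) else 1) * signCount t l := by
  simp [signCount]

lemma signCount_eq_one_of_not_mem {t : W} {l : List W} (h : t ∉ l) : signCount t l = 1 := by
  induction l with
  | nil => rfl
  | cons x l ih =>
    rw [signCount_cons]
    have hx : x ≠ t := fun hxt => h (hxt ▸ (List.mem_cons_self : x ∈ x :: l))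
    rw [if_neg hx, one_mul]
    exact ih (fun ht => h (List.mem_cons_of_mem x ht))

lemma reflRep_wordProd (ω : List B) (t : W) (ε : ℤˣ) :
    reflRep cs (cs.wordProd ω) (t, ε) =
      (cs.wordProd ω * t * (cs.wordProd ω)⁻¹, ε * signCount t (cs.rightInvSeq ω)) := by
  induction ω with
  | nil => simp
  | cons i ω ih =>
    rw [cs.wordProd_cons, map_mul, Equiv.Perm.mul_apply, ih, reflRep_simple, reflPerm_apply]
    set v := cs.wordProd ω with hv
    have hcond : (v * t * v⁻¹ = cs.simple i) ↔ (v⁻¹ * cs.simple i * v = t) := by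
      rw [mul_conj_eq_iff, eq_comm]
    refine Prod.ext ?_ ?_
    · simp only [reflFlip]
      group
    · simp only [reflFlip, hcond]
      rw [show cs.rightInvSeq (i :: ω) = (v⁻¹ * cs.simple i * v) :: cs.rightInvSeq ω from rfl]
      rw [signCount_cons]
      by_cases h : v⁻¹ * cs.simple i * v = t <;> simp [h, mul_assoc, mul_comm, mul_left_comm]

lemma eta_wordProd (ω : List B) (t : W) :
    eta cs (cs.wordProd ω) t = signCount t (cs.rightInvSeq ω) := by
  have h := reflRep_wordProd cs ω t 1
  rw [eta, h, one_mul]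

lemma reflRep_apply (w t : W) (ε : ℤˣ) :
    reflRep cs w (t, ε) = (w * t * w⁻¹, ε * eta cs w t) := by
  obtain ⟨ω, -, rfl⟩ := cs.exists_reduced_word' w
  rw [reflRep_wordProd, eta_wordProd]

lemma eta_mul (w₁ w₂ t : W) :
    eta cs (w₁ * w₂) t = eta cs w₂ t * eta cs w₁ (w₂ * t * w₂⁻¹) := by
  have h : reflRep cs (w₁ * w₂) (t, 1) = reflRep cs w₁ (reflRep cs w₂ (t, 1)) := by
    rw [map_mul, Equiv.Perm.mul_apply]
  rw [eta, h, reflRep_apply cs w₂ t 1, one_mul, reflRep_apply, eta, reflRep_apply]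

lemma eta_reflection {t : W} (ht : cs.IsReflection t) : eta cs t t = -1 := by
  obtain ⟨v, i, rfl⟩ := ht
  set t := v * cs.simple i * v⁻¹ with hT
  have hconj : v⁻¹ * t * (v⁻¹)⁻¹ = cs.simple i := by rw [hT]; group
  have step1 : reflRep cs v⁻¹ (t, 1) = (cs.simple i, eta cs v⁻¹ t) := by
    rw [reflRep_apply, hconj, one_mul]
  set a := eta cs v⁻¹ t with ha
  have step2 : reflRep cs (cs.simple i) (cs.simple i, a) = (cs.simple i, -a) := by
    rw [reflRep_simple, reflPerm_apply, reflFlip]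
    simp
  have step4 : a * eta cs v (cs.simple i) = 1 := by
    have h1 : reflRep cs v (reflRep cs v⁻¹ (t, 1)) = (t, 1) := by
      rw [← Equiv.Perm.mul_apply, ← map_mul, mul_inv_cancel, map_one, Equiv.Perm.one_apply]
    rw [step1, reflRep_apply] at h1
    exact congrArg Prod.snd h1
  have hfin : reflRep cs t (t, 1) = (t, -(a * eta cs v (cs.simple i))) := by
    have hmul : reflRep cs t = reflRep cs v * reflRep cs (cs.simple i) * reflRep cs v⁻¹ := by
      rw [← map_mul, ← map_mul, hT]
    rw [hmul, Equiv.Perm.mul_apply, Equiv.Perm.mul_apply, step1, step2, reflRep_apply]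
    refine Prod.ext ?_ ?_
    · simp only [hT]
    · simp only [neg_mul]
  rw [eta, hfin, step4]

lemma eta_neg_of_mul_lt {w t : W} (ht : cs.IsReflection t)
    (hl : cs.length (w * t) < cs.length w) : eta cs w t = -1 := by
  rcases Int.units_eq_one_or (eta cs w t) with h1 | h1
  · exfalso
    have hwt : eta cs (w * t) t = -1 := by
      rw [eta_mul]
      have htt : t * t * t⁻¹ = t := by rw [ht.mul_self, one_mul, ht.inv]
      rw [htt, h1, eta_reflection cs ht, mul_one]
    obtain ⟨σ, hσred, hσ⟩ := cs.exists_reduced_word' (w * t)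
    rw [hσ, eta_wordProd] at hwt
    have hmem : t ∈ cs.rightInvSeq σ := by
      by_contra hnm
      rw [signCount_eq_one_of_not_mem hnm] at hwt
      exact absurd hwt (by decide)
    have hinv := cs.isRightInversion_of_mem_rightInvSeq hσred hmem
    rw [← hσ] at hinv
    have h2 : cs.length (w * t * t) < cs.length (w * t) := hinv.2
    rw [mul_assoc, ht.mul_self, mul_one] at h2
    omega
  · exact h1

lemma mem_rightInvSeq_of_mul_lt {t : W} (ht : cs.IsReflection t) {ω : List B}
    (hl : cs.length (cs.wordProd ω * t) < cs.length (cs.wordProd ω)) :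
    t ∈ cs.rightInvSeq ω := by
  have h := eta_neg_of_mul_lt cs ht hl
  rw [eta_wordProd] at h
  by_contra hnm
  rw [signCount_eq_one_of_not_mem hnm] at h
  exact absurd h (by decide)

lemma mem_leftInvSeq_of_mul_lt {t : W} (ht : cs.IsReflection t) {ω : List B}
    (hl : cs.length (t * cs.wordProd ω) < cs.length (cs.wordProd ω)) :
    t ∈ cs.leftInvSeq ω := by
  have h1 : cs.length (cs.wordProd ω.reverse * t) < cs.length (cs.wordProd ω.reverse) := by
    rw [cs.wordProd_reverse]
    have e1 : ((cs.wordProd ω)⁻¹ * t)⁻¹ = t * cs.wordProd ω := by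
      rw [mul_inv_rev, inv_inv, ht.inv]
    rw [← cs.length_inv ((cs.wordProd ω)⁻¹ * t), e1, cs.length_inv]
    exact hl
  have h2 := mem_rightInvSeq_of_mul_lt cs ht h1
  rw [cs.rightInvSeq_reverse] at h2
  exact List.mem_reverse.mp h2

/-- Strong exchange property. -/
lemma exists_eraseIdx_of_mul_lt {t : W} (ht : cs.IsReflection t) {ω : List B}
    (hl : cs.length (t * cs.wordProd ω) < cs.length (cs.wordProd ω)) :
    ∃ j, j < ω.length ∧ cs.wordProd (ω.eraseIdx j) = t * cs.wordProd ω := by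
  have hmem := mem_leftInvSeq_of_mul_lt cs ht hl
  obtain ⟨j, hj, hget⟩ := List.mem_iff_getElem.mp hmem
  rw [cs.length_leftInvSeq] at hj
  refine ⟨j, hj, ?_⟩
  rw [← cs.getD_leftInvSeq_mul_wordProd ω j]
  congr 1
  rw [List.getD_eq_getElem _ 1 (by rw [cs.length_leftInvSeq]; exact hj)]
  exact hget

end StrongExchange




section OrderLemmas

open CoxeterSystem List Relation

variable {B W : Type*} [Group W] {M : CoxeterMatrix B} (cs : CoxeterSystem M W)

set_option linter.unusedSectionVars false

/- `BruhatLE`/`BruhatStep` placeholders for separate-file testing -/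

lemma le_mul_of_lt {x : W} {t : W} (ht : cs.IsReflection t)
    (h : cs.length x < cs.length (t * x)) : BruhatLE cs x (t * x) :=
  ReflTransGen.single ⟨t, ht, rfl, h⟩

lemma simple_mul_le_of_lt {x : W} (i : B)
    (h : cs.length (cs.simple i * x) < cs.length x) :
    BruhatLE cs (cs.simple i * x) x := by
  refine ReflTransGen.single ⟨cs.simple i, cs.isReflection_simple i, ?_, h⟩
  rw [cs.simple_mul_simple_cancel_left]

/-- Deleting one letter of a reduced word goes down in Bruhat order. -/
lemma eraseIdx_le {σ : List B} (hσ : cs.IsReduced σ) {k : ℕ} (hk : k < σ.length) :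
    BruhatLE cs (cs.wordProd (σ.eraseIdx k)) (cs.wordProd σ) := by
  set t := (cs.leftInvSeq σ).getD k 1 with hT
  have hmem : t ∈ cs.leftInvSeq σ := by
    rw [hT, List.getD_eq_getElem _ 1 (by rw [cs.length_leftInvSeq]; exact hk)]
    exact List.getElem_mem _
  have ht : cs.IsReflection t := cs.isReflection_of_mem_leftInvSeq σ hmem
  have heq : cs.wordProd (σ.eraseIdx k) = t * cs.wordProd σ :=
    (cs.getD_leftInvSeq_mul_wordProd σ k).symm
  have hlen : cs.length (cs.wordProd (σ.eraseIdx k)) < cs.length (cs.wordProd σ) := by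
    calc cs.length (cs.wordProd (σ.eraseIdx k)) ≤ (σ.eraseIdx k).length :=
          cs.length_wordProd_le _
      _ < σ.length := by rw [← List.length_eraseIdx_add_one hk]; omega
      _ = cs.length (cs.wordProd σ) := hσ.symm
  refine ReflTransGen.single ⟨t, ht, ?_, hlen⟩
  rw [heq, ← mul_assoc, ht.mul_self, one_mul]

/-- Key one-step lemma, via strong exchange. -/
lemma one_step (i : B) {b w : W} (hstep : BruhatStep cs b w)
    (hw : cs.length (cs.simple i * w) < cs.length w) :
    b = cs.simple i * w ∨ BruhatLE cs (cs.simple i * b) (cs.simple i * w) := by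
  obtain ⟨t, ht, rfl, hlen⟩ := hstep
  -- w = t * b is replaced: now the goal speaks of t * b
  obtain ⟨σ, hσlen, hσ⟩ := cs.exists_reduced_word (cs.simple i * (t * b))
  have hσred : cs.IsReduced σ := by
    show cs.length (cs.wordProd σ) = σ.length
    exact hσlen
  have hωprod : cs.wordProd (i :: σ) = t * b := by
    rw [cs.wordProd_cons, ← hσ, cs.simple_mul_simple_cancel_left]
  have hωred : ((i :: σ) : List B).length = cs.length (t * b) := by
    have h1 : cs.length (cs.simple i * (t * b)) + 1 = cs.length (t * b) :=
      cs.isLeftDescent_iff.mp hw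
    have h2 : cs.length (cs.wordProd σ) = σ.length := hσred
    simp only [List.length_cons, ← h2, ← hσ]
    omega
  have hexch : cs.length (t * cs.wordProd (i :: σ)) < cs.length (cs.wordProd (i :: σ)) := by
    rw [hωprod, ← mul_assoc, ht.mul_self, one_mul]
    exact hlen
  obtain ⟨j, hj, hjeq⟩ := exists_eraseIdx_of_mul_lt cs ht hexch
  rw [hωprod, ← mul_assoc, ht.mul_self, one_mul] at hjeq
  match j with
  | 0 =>
    left
    rw [List.eraseIdx_cons_zero] at hjeq
    exact (hσ.trans hjeq).symm
  | (k + 1) =>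
    right
    rw [List.eraseIdx_cons_succ] at hjeq
    rw [cs.wordProd_cons] at hjeq
    have hb : cs.simple i * b = cs.wordProd (σ.eraseIdx k) := by
      rw [← hjeq, cs.simple_mul_simple_cancel_left]
    have hk : k < σ.length := by
      simp only [List.length_cons] at hj
      omega
    rw [hb, hσ]
    exact eraseIdx_le cs hσred hk

/-- Property Z2: if `u ≤ w`, `sw < w` and `su > u` then `u ≤ sw`. -/
lemma bruhat_Z2 (i : B) {u w : W} (h : BruhatLE cs u w) :
    cs.length (cs.simple i * w) < cs.length w →
    cs.length u < cs.length (cs.simple i * u) →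
    BruhatLE cs u (cs.simple i * w) := by
  induction h with
  | refl =>
    intro h1 h2
    omega
  | @tail b w hub hstep ih =>
    intro hw hu
    rcases one_step cs i hstep hw with hbw | hble
    · rw [← hbw]; exact hub
    · rcases Nat.lt_or_ge (cs.length (cs.simple i * b)) (cs.length b) with hb | hb
      · exact ReflTransGen.trans (ih hb hu) hble
      · have hb' : cs.length b < cs.length (cs.simple i * b) :=
          lt_of_le_of_ne hb (Ne.symm (cs.length_simple_mul_ne b i))
        exact ReflTransGen.trans hub
          (ReflTransGen.trans (le_mul_of_lt cs (cs.isReflection_simple i) hb') hble)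

/-- Property Z3: if `u ≤ w`, `sw < w` and `su < u` then `su ≤ sw`. -/
lemma bruhat_Z3 (i : B) {u w : W} (h : BruhatLE cs u w)
    (hw : cs.length (cs.simple i * w) < cs.length w)
    (hu : cs.length (cs.simple i * u) < cs.length u) :
    BruhatLE cs (cs.simple i * u) (cs.simple i * w) := by
  refine bruhat_Z2 cs i (ReflTransGen.trans (simple_mul_le_of_lt cs i hu) h) hw ?_
  rwa [cs.simple_mul_simple_cancel_left]

/-- Monotonicity of ascents: if `u ≤ b`, `su > u`, `sb > b` then `su ≤ sb`. -/
lemma bruhat_Q (i : B) : ∀ n : ℕ, ∀ u b : W, BruhatLE cs u b →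
    cs.length u < cs.length (cs.simple i * u) →
    cs.length b < cs.length (cs.simple i * b) →
    cs.length (cs.simple i * b) ≤ n →
    BruhatLE cs (cs.simple i * u) (cs.simple i * b) := by
  intro n
  induction n using Nat.strong_induction_on with
  | _ n ihn =>
    intro u b h
    induction h with
    | refl => intro _ _ _; exact ReflTransGen.refl
    | @tail c b huc hstep ih =>
      intro hu hb hn
      obtain ⟨t, ht, rfl, hlen⟩ := hstep
      rcases Nat.lt_or_ge (cs.length (cs.simple i * c)) (cs.length c) with hcd | hca
      · -- descent at c
        have h3 : BruhatLE cs u (cs.simple i * c) := bruhat_Z2 cs i huc hcd hu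
        have hmeas : cs.length c < n := by
          have := cs.length_simple_mul (t * c) i
          omega
        have h4 : BruhatLE cs (cs.simple i * u) (cs.simple i * (cs.simple i * c)) := by
          refine ihn (cs.length c) hmeas u (cs.simple i * c) h3 hu ?_ ?_
          · rwa [cs.simple_mul_simple_cancel_left]
          · rw [cs.simple_mul_simple_cancel_left]
        rw [cs.simple_mul_simple_cancel_left] at h4
        have h5 : BruhatLE cs c (t * c) := ReflTransGen.single ⟨t, ht, rfl, hlen⟩
        have h6 : BruhatLE cs (t * c) (cs.simple i * (t * c)) :=
          le_mul_of_lt cs (cs.isReflection_simple i) hb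
        exact ReflTransGen.trans h4 (ReflTransGen.trans h5 h6)
      · -- ascent at c
        have hca' : cs.length c < cs.length (cs.simple i * c) :=
          lt_of_le_of_ne hca (Ne.symm (cs.length_simple_mul_ne c i))
        have h1 : BruhatLE cs (cs.simple i * u) (cs.simple i * c) :=
          ih hu hca' (by
            have h7 := cs.length_simple_mul c i
            omega)
        -- one-step: s c ≤ s (t c)
        have hstep2 : BruhatStep cs (cs.simple i * c) (cs.simple i * (t * c)) := by
          refine ⟨cs.simple i * t * (cs.simple i)⁻¹, ht.conj (cs.simple i), ?_, ?_⟩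
          · rw [cs.inv_simple]
            simp only [mul_assoc, cs.simple_mul_simple_cancel_left]
          · have h7 := cs.length_simple_mul c i
            omega
        exact ReflTransGen.trans h1 (ReflTransGen.single hstep2)

/-- Property Z1: if `u ≤ w` and `sw < w` then `su ≤ w`. -/
lemma bruhat_Z1 (i : B) {u w : W} (h : BruhatLE cs u w) :
    cs.length (cs.simple i * w) < cs.length w →
    BruhatLE cs (cs.simple i * u) w := by
  induction h with
  | refl =>
    intro hw
    exact simple_mul_le_of_lt cs i hw
  | @tail b w hub hstep ih =>
    intro hw
    have hbw : BruhatLE cs b w := ReflTransGen.single hstep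
    rcases Nat.lt_or_ge (cs.length (cs.simple i * b)) (cs.length b) with hb | hb
    · exact ReflTransGen.trans (ih hb) hbw
    · have hb' : cs.length b < cs.length (cs.simple i * b) :=
        lt_of_le_of_ne hb (Ne.symm (cs.length_simple_mul_ne b i))
      rcases Nat.lt_or_ge (cs.length (cs.simple i * u)) (cs.length u) with hud | hua
      · exact ReflTransGen.trans (simple_mul_le_of_lt cs i hud) (ReflTransGen.trans hub hbw)
      · have hua' : cs.length u < cs.length (cs.simple i * u) :=
          lt_of_le_of_ne hua (Ne.symm (cs.length_simple_mul_ne u i))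
        have hq : BruhatLE cs (cs.simple i * u) (cs.simple i * b) :=
          bruhat_Q cs i (cs.length (cs.simple i * b)) u b hub hua' hb' le_rfl
        rcases one_step cs i hstep hw with hbeq | hble
        · rw [hbeq, cs.simple_mul_simple_cancel_left] at hq
          exact hq
        · exact ReflTransGen.trans hq
            (ReflTransGen.trans hble (simple_mul_le_of_lt cs i hw))

end OrderLemmas


/-- If `s ∉ D_L(u)` and `su ≰ w`, then `ℓ(sw) > ℓ(w)` and `x ↦ s * x` is a
poset isomorphism from `[u,w]` onto `[su,sw]`. -/
theorem mul_orderIso_of_not_le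
    {B W : Type*} [Group W] {M : CoxeterMatrix B} (cs : CoxeterSystem M W)
    (u w : W) (huw : BruhatLE cs u w) (hne : u ≠ w)
    (i : B) (hu : ¬ cs.IsLeftDescent u i) (hsu : ¬ BruhatLE cs (cs.simple i * u) w) :
    cs.length w < cs.length (cs.simple i * w) ∧
    ∃ e : BruhatInterval cs u w ≃o BruhatInterval cs (cs.simple i * u) (cs.simple i * w),
      ∀ y : BruhatInterval cs u w, (e y).1 = cs.simple i * y.1 := by
  have hu' : cs.length u < cs.length (cs.simple i * u) := by
    have h1 := cs.length_simple_mul u i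
    have h2 : ¬ (cs.length (cs.simple i * u) < cs.length u) := hu
    omega
  have hsw : cs.length w < cs.length (cs.simple i * w) := by
    rcases Nat.lt_or_ge (cs.length (cs.simple i * w)) (cs.length w) with hd | hge
    · exact absurd (bruhat_Z1 cs i huw hd) hsu
    · have := cs.length_simple_mul w i
      omega
  refine ⟨hsw, ?_⟩
  have asc : ∀ x : W, BruhatLE cs u x → BruhatLE cs x w →
      cs.length x < cs.length (cs.simple i * x) := by
    intro x hux hxw
    rcases Nat.lt_or_ge (cs.length (cs.simple i * x)) (cs.length x) with hd | hge
    · exact absurd (Relation.ReflTransGen.trans (bruhat_Z1 cs i hux hd) hxw) hsu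
    · have := cs.length_simple_mul x i
      omega
  have descsw : cs.length (cs.simple i * (cs.simple i * w)) < cs.length (cs.simple i * w) := by
    rwa [cs.simple_mul_simple_cancel_left]
  have descsu : cs.length (cs.simple i * (cs.simple i * u)) < cs.length (cs.simple i * u) := by
    rwa [cs.simple_mul_simple_cancel_left]
  have desc : ∀ z : W, BruhatLE cs (cs.simple i * u) z → BruhatLE cs z (cs.simple i * w) →
      cs.length (cs.simple i * z) < cs.length z := by
    intro z hz1 hz2
    rcases Nat.lt_or_ge (cs.length (cs.simple i * z)) (cs.length z) with hd | hge
    · exact hd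
    · exfalso
      have hz' : cs.length z < cs.length (cs.simple i * z) := by
        have := cs.length_simple_mul z i
        omega
      have h3 := bruhat_Z2 cs i hz2 descsw hz'
      rw [cs.simple_mul_simple_cancel_left] at h3
      exact hsu (Relation.ReflTransGen.trans hz1 h3)
  have fwd : ∀ x : W, BruhatLE cs u x → BruhatLE cs x w →
      BruhatLE cs (cs.simple i * u) (cs.simple i * x) ∧
      BruhatLE cs (cs.simple i * x) (cs.simple i * w) :=
    fun x hux hxw =>
      ⟨bruhat_Q cs i (cs.length (cs.simple i * x)) u x hux hu' (asc x hux hxw) le_rfl,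
        bruhat_Q cs i (cs.length (cs.simple i * w)) x w hxw (asc x hux hxw) hsw le_rfl⟩
  have bwd : ∀ z : W, BruhatLE cs (cs.simple i * u) z → BruhatLE cs z (cs.simple i * w) →
      BruhatLE cs u (cs.simple i * z) ∧ BruhatLE cs (cs.simple i * z) w := by
    intro z hz1 hz2
    constructor
    · have h4 := bruhat_Z3 cs i hz1 (desc z hz1 hz2) descsu
      rwa [cs.simple_mul_simple_cancel_left] at h4
    · have h4 := bruhat_Z3 cs i hz2 descsw (desc z hz1 hz2)
      rwa [cs.simple_mul_simple_cancel_left] at h4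
  refine ⟨⟨⟨fun x => ⟨cs.simple i * x.1, fwd x.1 x.2.1 x.2.2⟩,
      fun z => ⟨cs.simple i * z.1, bwd z.1 z.2.1 z.2.2⟩, ?_, ?_⟩, ?_⟩, fun y => rfl⟩
  · intro x
    exact Subtype.ext (cs.simple_mul_simple_cancel_left i)
  · intro z
    exact Subtype.ext (cs.simple_mul_simple_cancel_left i)
  · intro x y
    constructor
    · intro h
      have hh : BruhatLE cs (cs.simple i * x.1) (cs.simple i * y.1) := h
      have dx : cs.length (cs.simple i * (cs.simple i * x.1)) < cs.length (cs.simple i * x.1) := by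
        rw [cs.simple_mul_simple_cancel_left]
        exact asc x.1 x.2.1 x.2.2
      have dy : cs.length (cs.simple i * (cs.simple i * y.1)) < cs.length (cs.simple i * y.1) := by
        rw [cs.simple_mul_simple_cancel_left]
        exact asc y.1 y.2.1 y.2.2
      have h5 := bruhat_Z3 cs i hh dy dx
      rw [cs.simple_mul_simple_cancel_left, cs.simple_mul_simple_cancel_left] at h5
      exact h5
    · intro h
      have hh : BruhatLE cs x.1 y.1 := h
      exact bruhat_Q cs i (cs.length (cs.simple i * y.1)) x.1 y.1 hh
        (asc x.1 x.2.1 x.2.2) (asc y.1 y.2.1 y.2.2) le_rfl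


end Paper
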